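/- For all l ∈ [0, π_2/2], ∫_0^l cleaf_2(t) dt = arctan(sleaf_2(l)). -/

import Mathlib

open Set MeasureTheory intervalIntegral Topology Filter

noncomputable def lemf (t : ℝ) : ℝ := 1 / Real.sqrt (1 - t ^ 4)
noncomputable def lemF (x : ℝ) : ℝ := ∫ t in (0:ℝ)..x, lemf t

lemma lemf_nonneg (t : ℝ) : 0 ≤ lemf t := by
  unfold lemf; positivity

lemma lemf_pos {t : ℝ} (h0 : -1 < t) (h1 : t < 1) : 0 < lemf t := by
  have h2 : t ^ 2 < 1 := by nlinarith
  have h4 : t ^ 4 < 1 := by nlinarith [sq_nonneg t]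
  have : 0 < Real.sqrt (1 - t ^ 4) := Real.sqrt_pos.2 (by linarith)
  unfold lemf; positivity

lemma lemf_measurable : Measurable lemf := by
  unfold lemf; fun_prop

lemma lemf_integrable : IntervalIntegrable lemf volume 0 1 := by
  have hg : IntervalIntegrable (fun t : ℝ => (1 - t) ^ (-(1/2) : ℝ)) volume 0 1 := by
    have := ((intervalIntegral.intervalIntegrable_rpow' (a := 0) (b := 1)
      (r := (-(1/2) : ℝ)) (by norm_num)).comp_sub_left 1).symm
    simpa using this
  rw [intervalIntegrable_iff_integrableOn_Ioc_of_le (by norm_num)] at hg ⊢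
  apply hg.mono' lemf_measurable.aestronglyMeasurable
  filter_upwards [ae_restrict_mem measurableSet_Ioc] with t ht
  rw [Real.norm_eq_abs, abs_of_nonneg (lemf_nonneg t)]
  obtain ⟨ht0, ht1⟩ := ht
  have h1t : (0:ℝ) ≤ 1 - t := by linarith
  rw [Real.rpow_neg h1t, ← Real.sqrt_eq_rpow]
  rcases eq_or_lt_of_le ht1 with h | h
  · simp [lemf, h]
  · have h1 : 0 < Real.sqrt (1 - t) := Real.sqrt_pos.2 (by linarith)
    have h2 : Real.sqrt (1 - t) ≤ Real.sqrt (1 - t ^ 4) := by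
      apply Real.sqrt_le_sqrt
      have := pow_le_of_le_one ht0.le ht1 (by norm_num : 4 ≠ 0)
      linarith
    rw [lemf, one_div]
    exact inv_anti₀ h1 h2

lemma lemf_intOn {a b : ℝ} (ha : a ∈ Icc (0:ℝ) 1) (hb : b ∈ Icc (0:ℝ) 1) :
    IntervalIntegrable lemf volume a b := by
  apply lemf_integrable.mono_set
  rw [uIcc_of_le (by norm_num : (0:ℝ) ≤ 1)]
  exact uIcc_subset_Icc ha hb

lemma lemF_sub {a b : ℝ} (ha : a ∈ Icc (0:ℝ) 1) (hb : b ∈ Icc (0:ℝ) 1) :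
    lemF b - lemF a = ∫ t in a..b, lemf t := by
  unfold lemF
  rw [← intervalIntegral.integral_add_adjacent_intervals (a := 0) (b := a) (c := b)
    (lemf_intOn ⟨le_refl 0, zero_le_one⟩ ha) (lemf_intOn ha hb)]
  ring

lemma lemF_strictMonoOn : StrictMonoOn lemF (Icc 0 1) := by
  intro a ha b hb hab
  have : 0 < ∫ t in a..b, lemf t := by
    apply intervalIntegral.intervalIntegral_pos_of_pos_on (lemf_intOn ha hb) _ hab
    intro x hx
    exact lemf_pos (by linarith [ha.1, hx.1]) (by linarith [hb.2, hx.2])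
  have := lemF_sub ha hb
  linarith

lemma lemF_zero : lemF 0 = 0 := by simp [lemF]

lemma lemF_nonneg {a : ℝ} (ha : a ∈ Icc (0:ℝ) 1) : 0 ≤ lemF a := by
  rcases eq_or_lt_of_le ha.1 with h | h
  · rw [← h, lemF_zero]
  · have := lemF_strictMonoOn (left_mem_Icc.2 zero_le_one) ha h
    rw [lemF_zero] at this; exact this.le

lemma lemF_pos_one : 0 < lemF 1 :=  by
  have := lemF_strictMonoOn (left_mem_Icc.2 zero_le_one) (right_mem_Icc.2 zero_le_one) one_pos
  rwa [lemF_zero] at this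

lemma lemF_continuousOn : ContinuousOn lemF (Icc 0 1) := by
  have hint : IntegrableOn lemf (Icc 0 1) volume := by
    rw [integrableOn_Icc_iff_integrableOn_Ioc]
    have h := lemf_integrable
    rwa [intervalIntegrable_iff_integrableOn_Ioc_of_le zero_le_one] at h
  have := intervalIntegral.continuousOn_primitive_interval (a := (0:ℝ)) (b := 1)
    (μ := volume) (f := lemf) (by rwa [uIcc_of_le zero_le_one])
  rwa [uIcc_of_le zero_le_one] at this

lemma lemf_continuousAt {x : ℝ} (h0 : -1 < x) (h1 : x < 1) : ContinuousAt lemf x := by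
  have h2 : x ^ 2 < 1 := by nlinarith
  have h4 : x ^ 4 < 1 := by nlinarith [sq_nonneg x]
  have hne : Real.sqrt (1 - x ^ 4) ≠ 0 := (Real.sqrt_pos.2 (by linarith)).ne'
  have hc : ContinuousAt (fun t : ℝ => Real.sqrt (1 - t ^ 4)) x :=
    Real.continuous_sqrt.continuousAt.comp (by fun_prop)
  exact continuousAt_const.div hc hne

lemma lemF_hasDeriv {x : ℝ} (h0 : 0 < x) (h1 : x < 1) : HasDerivAt lemF (lemf x) x :=
  intervalIntegral.integral_hasDerivAt_right
    (lemf_intOn (left_mem_Icc.2 zero_le_one) ⟨h0.le, h1.le⟩)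
    ⟨univ, Filter.univ_mem, lemf_measurable.aestronglyMeasurable.restrict⟩
    (lemf_continuousAt (by linarith) h1)

noncomputable def lemg (x : ℝ) : ℝ := Real.sqrt ((1 - x ^ 2) / (1 + x ^ 2))


lemma lemg_mem {x : ℝ} (h0 : 0 ≤ x) (h1 : x ≤ 1) : lemg x ∈ Icc (0:ℝ) 1 := by
  refine ⟨Real.sqrt_nonneg _, ?_⟩
  rw [lemg, show ((1:ℝ) - x ^ 2) / (1 + x ^ 2) = 1 - (2 * x ^ 2) / (1 + x ^ 2) by
    field_simp; ring]
  calc Real.sqrt (1 - 2 * x ^ 2 / (1 + x ^ 2)) ≤ Real.sqrt 1 := by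
        apply Real.sqrt_le_sqrt
        have : 0 ≤ 2 * x ^ 2 / (1 + x ^ 2) := by positivity
        linarith
    _ = 1 := by simp

lemma lemg_zero : lemg 0 = 1 := by simp [lemg]
lemma lemg_one : lemg 1 = 0 := by simp [lemg]

lemma lemg_pos {x : ℝ} (h1 : x < 1) (h0 : -1 < x) : 0 < lemg x := by
  apply Real.sqrt_pos.2
  have : x ^ 2 < 1 := by nlinarith
  exact div_pos (by linarith) (by positivity)

lemma lemg_lt_one {x : ℝ} (h0 : 0 < x) (h1 : x ≤ 1) : lemg x < 1 := by
  have hx2 : x ^ 2 ≤ 1 := by nlinarith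
  rw [lemg, Real.sqrt_lt' one_pos]
  rw [one_pow, div_lt_one (by positivity)]
  nlinarith

lemma lemg_continuous : Continuous lemg := by
  apply Real.continuous_sqrt.comp
  apply Continuous.div (by continuity) (by continuity)
  intro x; positivity

-- key: (lemF ∘ lemg) has derivative -lemf x on (0,1)
lemma lemFg_hasDeriv {x : ℝ} (h0 : 0 < x) (h1 : x < 1) :
    HasDerivAt (fun y => lemF (lemg y)) (-(lemf x)) x := by
  have hu : (0:ℝ) < 1 + x ^ 2 := by positivity
  have hx2 : x ^ 2 < 1 := by nlinarith
  have hh : (0:ℝ) < (1 - x ^ 2) / (1 + x ^ 2) := div_pos (by linarith) (by positivity)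
  have hgx0 : 0 < lemg x := lemg_pos h1 (by linarith)
  have hgx1 : lemg x < 1 := lemg_lt_one h0 h1.le
  -- derivative of inner rational fn
  have hrat : HasDerivAt (fun y : ℝ => (1 - y ^ 2) / (1 + y ^ 2))
      ((-4 * x) / (1 + x ^ 2) ^ 2) x := by
    have h1' : HasDerivAt (fun y : ℝ => 1 - y ^ 2) (-(2 * x)) x := by
      simpa using ((hasDerivAt_pow 2 x).const_sub 1)
    have h2' : HasDerivAt (fun y : ℝ => 1 + y ^ 2) (2 * x) x := by
      simpa using ((hasDerivAt_pow 2 x).const_add 1)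
    have := h1'.div h2' (by positivity)
    refine this.congr_deriv ?_
    symm
    field_simp
    ring
  have hg' : HasDerivAt lemg ((-4 * x) / (1 + x ^ 2) ^ 2 / (2 * lemg x)) x := by
    unfold lemg
    exact hrat.sqrt hh.ne'
  have hF : HasDerivAt lemF (lemf (lemg x)) (lemg x) := lemF_hasDeriv hgx0 hgx1
  have hchain := hF.comp x hg'
  refine hchain.congr_deriv ?_
  symm
  -- now algebra: lemf (lemg x) * g' = -(lemf x)
  have hgsq : lemg x ^ 2 = (1 - x ^ 2) / (1 + x ^ 2) := Real.sq_sqrt hh.le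
  have hg4 : 1 - lemg x ^ 4 = (2 * x / (1 + x ^ 2)) ^ 2 := by
    have : lemg x ^ 4 = ((1 - x ^ 2) / (1 + x ^ 2)) ^ 2 := by
      rw [show (4:ℕ) = 2*2 by norm_num, pow_mul, hgsq]
    rw [this]; field_simp; ring
  have hsq1 : Real.sqrt (1 - lemg x ^ 4) = 2 * x / (1 + x ^ 2) := by
    rw [hg4, Real.sqrt_sq (by positivity)]
  have hsq2 : Real.sqrt (1 - x ^ 4) = (1 + x ^ 2) * Real.sqrt ((1 - x ^ 2) / (1 + x ^ 2)) := by
    rw [show (1:ℝ) - x ^ 4 = (1 + x ^ 2) ^ 2 * ((1 - x ^ 2) / (1 + x ^ 2)) by field_simp; ring,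
      Real.sqrt_mul (by positivity), Real.sqrt_sq hu.le]
  have hsg : 0 < Real.sqrt ((1 - x ^ 2) / (1 + x ^ 2)) := Real.sqrt_pos.2 hh
  have ha : (0:ℝ) < Real.sqrt (1 - x ^ 2) := Real.sqrt_pos.2 (by linarith)
  have hb : (0:ℝ) < Real.sqrt (1 + x ^ 2) := Real.sqrt_pos.2 hu
  have ha2 : Real.sqrt (1 - x ^ 2) ^ 2 = 1 - x ^ 2 := Real.sq_sqrt (by linarith)
  have hb2 : Real.sqrt (1 + x ^ 2) ^ 2 = 1 + x ^ 2 := Real.sq_sqrt hu.le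
  have hgx : lemg x = Real.sqrt (1 - x ^ 2) / Real.sqrt (1 + x ^ 2) := by
    rw [lemg, Real.sqrt_div (by linarith)]
  have hab : Real.sqrt (1 - x ^ 4) = Real.sqrt (1 - x ^ 2) * Real.sqrt (1 + x ^ 2) := by
    rw [show (1:ℝ) - x ^ 4 = (1 - x ^ 2) * (1 + x ^ 2) by ring, Real.sqrt_mul (by linarith)]
  rw [lemf, lemf, hsq1, hab, hgx]
  rw [div_div_eq_mul_div, div_mul_eq_mul_div]
  field_simp
  ring_nf
  rw [hb2]
  ring

lemma lemFg_eq {x : ℝ} (hx : x ∈ Icc (0:ℝ) 1) : lemF (lemg x) = lemF 1 - lemF x := by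
  set D : ℝ → ℝ := fun y => lemF y + lemF (lemg y) with hD
  have hDcont : ContinuousOn D (Icc 0 1) := by
    apply lemF_continuousOn.add
    apply lemF_continuousOn.comp lemg_continuous.continuousOn
    intro y hy; exact lemg_mem hy.1 hy.2
  have hconst : ∀ y ∈ Ioo (0:ℝ) 1, ∀ z ∈ Ioo (0:ℝ) 1, y ≤ z → D y = D z := by
    intro y hy z hz hyz
    have h0 : (∫ t in y..z, (0:ℝ)) = D z - D y := by
      apply intervalIntegral.integral_eq_sub_of_hasDerivAt
      · intro t ht
        rw [uIcc_of_le hyz] at ht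
        have ht0 : 0 < t := lt_of_lt_of_le hy.1 ht.1
        have ht1 : t < 1 := lt_of_le_of_lt ht.2 hz.2
        have := (lemF_hasDeriv ht0 ht1).add (lemFg_hasDeriv ht0 ht1)
        simp at this; exact this
      · exact intervalIntegrable_const
    simp only [intervalIntegral.integral_zero] at h0
    linarith
  have hx0 : D 0 = lemF 1 := by simp [hD, lemF_zero, lemg_zero]
  have hDconstIoo : ∀ y ∈ Ioo (0:ℝ) 1, D y = lemF 1 := by
    intro y hy
    have hne : (𝓝[Ioc (0:ℝ) y] 0).NeBot := by
      rw [← mem_closure_iff_nhdsWithin_neBot, closure_Ioc hy.1.ne]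
      exact ⟨le_refl 0, hy.1.le⟩
    have htend : Filter.Tendsto D (𝓝[Ioc (0:ℝ) y] 0) (𝓝 (D 0)) := by
      apply (hDcont 0 ⟨le_refl 0, zero_le_one⟩).mono
      intro t ht
      exact ⟨ht.1.le, le_trans ht.2 hy.2.le⟩
    have heq : ∀ᶠ t in 𝓝[Ioc (0:ℝ) y] 0, D t = D y := by
      filter_upwards [eventually_mem_nhdsWithin] with t ht
      exact hconst t ⟨ht.1, lt_of_le_of_lt ht.2 hy.2⟩ y hy ht.2
    have heq' : ∀ᶠ t in 𝓝[Ioc (0:ℝ) y] 0, D y = D t := by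
      filter_upwards [heq] with t ht using ht.symm
    have := Filter.Tendsto.congr' heq' (tendsto_const_nhds (α := ℝ) (x := D y))
    have := tendsto_nhds_unique this htend
    rw [this, hx0]
  rcases eq_or_lt_of_le hx.1 with h | h0
  · rw [← h, lemg_zero, lemF_zero]; ring
  rcases eq_or_lt_of_le hx.2 with h | h1
  · rw [h, lemg_one, lemF_zero]; ring
  have := hDconstIoo x ⟨h0, h1⟩
  simp only [hD] at this
  linarith

theorem integral_cleaf (π₂ : ℝ) (hπ : π₂ = 2 * ∫ t in (0:ℝ)..1, 1 / Real.sqrt (1 - t ^ 4))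
    (sleaf : ℝ → ℝ)
    (hs : ∀ l ∈ Set.Icc 0 (π₂ / 2), sleaf l ∈ Set.Icc (0:ℝ) 1 ∧
      (∫ t in (0:ℝ)..(sleaf l), 1 / Real.sqrt (1 - t ^ 4)) = l)
    (cleaf : ℝ → ℝ)
    (hc : ∀ l ∈ Set.Icc 0 (π₂ / 2), cleaf l ∈ Set.Icc (0:ℝ) 1 ∧
      (∫ t in (cleaf l)..1, 1 / Real.sqrt (1 - t ^ 4)) = l) :
    ∀ l ∈ Set.Icc 0 (π₂ / 2),
      (∫ t in (0:ℝ)..l, cleaf t) = Real.arctan (sleaf l) := by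
  have hT : π₂ / 2 = lemF 1 := by rw [hπ, lemF]; simp only [lemf]; ring
  set T := lemF 1 with hTdef
  have hT0 : 0 < T := lemF_pos_one
  rw [hT] at hs hc ⊢
  -- restate hs, hc in terms of lemF
  have hs' : ∀ l ∈ Icc (0:ℝ) T, sleaf l ∈ Icc (0:ℝ) 1 ∧ lemF (sleaf l) = l := by
    intro l hl
    obtain ⟨h1, h2⟩ := hs l hl
    refine ⟨h1, ?_⟩
    rw [lemF]; simp only [lemf]; exact h2
  have hc' : ∀ l ∈ Icc (0:ℝ) T, cleaf l ∈ Icc (0:ℝ) 1 ∧ lemF (cleaf l) = T - l := by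
    intro l hl
    obtain ⟨h1, h2⟩ := hc l hl
    refine ⟨h1, ?_⟩
    have h3 : (∫ t in (cleaf l)..1, lemf t) = l := by simp only [lemf]; exact h2
    have := lemF_sub h1 (right_mem_Icc.2 zero_le_one)
    rw [h3] at this
    linarith
  have hFinj : InjOn lemF (Icc 0 1) := lemF_strictMonoOn.injOn
  -- basic values
  have hs0 : sleaf 0 = 0 := by
    have h := hs' 0 ⟨le_refl 0, hT0.le⟩
    refine hFinj h.1 ⟨le_refl 0, zero_le_one⟩ ?_
    rw [h.2, lemF_zero]
  -- monotonicity of sleaf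
  have smono : MonotoneOn sleaf (Icc 0 T) := by
    intro a ha b hb hab
    by_contra hlt
    push_neg at hlt
    have := lemF_strictMonoOn (hs' b hb).1 (hs' a ha).1 hlt
    rw [(hs' a ha).2, (hs' b hb).2] at this
    linarith
  -- surjectivity of sleaf onto [0,1]
  have ssurj : SurjOn sleaf (Icc 0 T) (Icc 0 1) := by
    intro y hy
    have hFy : lemF y ∈ Icc (0:ℝ) T := by
      constructor
      · exact lemF_nonneg hy
      · rcases eq_or_lt_of_le hy.2 with h | h
        · rw [h]
        · exact (lemF_strictMonoOn hy (right_mem_Icc.2 zero_le_one) h).le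
    refine ⟨lemF y, hFy, ?_⟩
    exact hFinj (hs' _ hFy).1 hy ((hs' _ hFy).2)
  -- sleaf maps interior to interior
  have smem : ∀ l ∈ Ioo (0:ℝ) T, sleaf l ∈ Ioo (0:ℝ) 1 := by
    intro l hl
    have h := hs' l ⟨hl.1.le, hl.2.le⟩
    rcases eq_or_lt_of_le h.1.1 with h0 | h0
    · exfalso
      have : lemF (sleaf l) = 0 := by rw [← h0, lemF_zero]
      rw [h.2] at this; exact hl.1.ne' this
    rcases eq_or_lt_of_le h.1.2 with h1 | h1
    · exfalso
      have : lemF (sleaf l) = T := by rw [h1]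
      rw [h.2] at this; exact hl.2.ne this
    exact ⟨h0, h1⟩
  have sT : sleaf T = 1 := by
    have h := hs' T ⟨hT0.le, le_refl T⟩
    exact hFinj h.1 (right_mem_Icc.2 zero_le_one) (by rw [h.2])
  -- continuity of sleaf on [0, T]
  have scont : ContinuousOn sleaf (Icc 0 T) := by
    intro a ha
    have hsa01 : sleaf a ∈ Icc (0:ℝ) 1 := (hs' a ha).1
    have hright : a < T → ContinuousWithinAt sleaf (Ici a) a := by
      intro haT
      apply continuousWithinAt_right_of_monotoneOn_of_exists_between smono
        (Icc_mem_nhdsGE_of_mem ⟨ha.1, haT⟩)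
      intro b hb
      have sa1 : sleaf a < 1 := by
        rcases eq_or_lt_of_le ha.1 with h0 | h0
        · rw [← h0, hs0]; norm_num
        · exact (smem a ⟨h0, haT⟩).2
      set y := (sleaf a + min b 1) / 2 with hy
      have hmin : sleaf a < min b 1 := lt_min hb sa1
      have hy1 : sleaf a < y := by rw [hy]; linarith
      have hy2 : y < min b 1 := by rw [hy]; linarith
      have hymem : y ∈ Icc (0:ℝ) 1 := by
        constructor
        · linarith [hsa01.1]
        · have := min_le_right b 1; linarith
      obtain ⟨c, hcmem, hcy⟩ := ssurj hymem
      exact ⟨c, hcmem, by rw [hcy]; exact ⟨hy1, lt_of_lt_of_le hy2 (min_le_left b 1)⟩⟩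
    have hleft : 0 < a → ContinuousWithinAt sleaf (Iic a) a := by
      intro ha0
      apply continuousWithinAt_left_of_monotoneOn_of_exists_between smono
        (Icc_mem_nhdsLE_of_mem ⟨ha0, ha.2⟩)
      intro b hb
      have sa0 : 0 < sleaf a := by
        rcases eq_or_lt_of_le ha.2 with h1 | h1
        · rw [h1, sT]; norm_num
        · exact (smem a ⟨ha0, h1⟩).1
      set y := (max b 0 + sleaf a) / 2 with hy
      have hmax : max b 0 < sleaf a := max_lt hb sa0
      have hy1 : y < sleaf a := by rw [hy]; linarith
      have hy2 : max b 0 < y := by rw [hy]; linarith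
      have hymem : y ∈ Icc (0:ℝ) 1 := by
        constructor
        · have := le_max_right b 0; linarith
        · linarith [hsa01.2]
      obtain ⟨c, hcmem, hcy⟩ := ssurj hymem
      exact ⟨c, hcmem, by rw [hcy]; exact ⟨lt_of_le_of_lt (le_max_left b 0) hy2, hy1⟩⟩
    rcases eq_or_lt_of_le ha.1 with h0 | h0
    · have hcw := hright (by rw [← h0]; exact hT0)
      exact hcw.mono (fun x hx => by rw [← h0]; exact hx.1)
    rcases eq_or_lt_of_le ha.2 with h1 | h1
    · exact (hleft h0).mono (by rw [h1]; exact fun x hx => hx.2)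
    · exact ((hleft h0).union (hright h1)).mono (by
        intro x _; rcases le_total x a with h | h
        · exact Or.inl h
        · exact Or.inr h)
  -- derivative of sleaf
  have sderiv : ∀ l ∈ Ioo (0:ℝ) T, HasDerivAt sleaf (Real.sqrt (1 - sleaf l ^ 4)) l := by
    intro l hl
    have hsl := smem l hl
    have hcontAt : ContinuousAt sleaf l :=
      (scont l ⟨hl.1.le, hl.2.le⟩).continuousAt (Icc_mem_nhds hl.1 hl.2)
    have hfpos : 0 < lemf (sleaf l) := lemf_pos (by linarith [hsl.1]) hsl.2
    have hFd : HasDerivAt lemF (lemf (sleaf l)) (sleaf l) := lemF_hasDeriv hsl.1 hsl.2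
    have hev : ∀ᶠ y in 𝓝 l, lemF (sleaf y) = y := by
      filter_upwards [Icc_mem_nhds hl.1 hl.2] with y hy
      exact (hs' y hy).2
    have := HasDerivAt.of_local_left_inverse hcontAt hFd hfpos.ne' hev
    convert this using 1
    · rfl
    rw [lemf, one_div, inv_inv]
  -- the key identity : cleaf l = lemg (sleaf l) on the interior
  have hci : ∀ l ∈ Ioo (0:ℝ) T, cleaf l = lemg (sleaf l) := by
    intro l hl
    have hsl := smem l hl
    have h1 : lemF (cleaf l) = T - l := (hc' l ⟨hl.1.le, hl.2.le⟩).2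
    have h2 : lemF (lemg (sleaf l)) = T - l := by
      rw [lemFg_eq ⟨hsl.1.le, hsl.2.le⟩, (hs' l ⟨hl.1.le, hl.2.le⟩).2]
    exact hFinj (hc' l ⟨hl.1.le, hl.2.le⟩).1 (lemg_mem hsl.1.le hsl.2.le) (by rw [h1, h2])
  -- derivative of arctan ∘ sleaf
  have φderiv : ∀ t ∈ Ioo (0:ℝ) T, HasDerivAt (fun y => Real.arctan (sleaf y)) (cleaf t) t := by
    intro t ht
    have hst := smem t ht
    have := (Real.hasDerivAt_arctan (sleaf t)).comp t (sderiv t ht)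
    refine this.congr_deriv ?_
    symm
    rw [hci t ht]
    set x := sleaf t with hx
    have hu : (0:ℝ) < 1 + x ^ 2 := by positivity
    have hb : (0:ℝ) < Real.sqrt (1 + x ^ 2) := Real.sqrt_pos.2 hu
    have hb2 : Real.sqrt (1 + x ^ 2) ^ 2 = 1 + x ^ 2 := Real.sq_sqrt hu.le
    have hgx : lemg x = Real.sqrt (1 - x ^ 2) / Real.sqrt (1 + x ^ 2) := by
      rw [lemg, Real.sqrt_div (by nlinarith [hst.1, hst.2])]
    have hab : Real.sqrt (1 - x ^ 4) = Real.sqrt (1 - x ^ 2) * Real.sqrt (1 + x ^ 2) := by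
      rw [show (1:ℝ) - x ^ 4 = (1 - x ^ 2) * (1 + x ^ 2) by ring,
        Real.sqrt_mul (by nlinarith [hst.1, hst.2])]
    rw [hgx, hab, div_eq_iff hb.ne']
    rw [show 1 / (1 + x ^ 2) * (Real.sqrt (1 - x ^ 2) * Real.sqrt (1 + x ^ 2)) * Real.sqrt (1 + x ^ 2)
      = Real.sqrt (1 - x ^ 2) * (Real.sqrt (1 + x ^ 2) ^ 2) / (1 + x ^ 2) by ring, hb2]
    field_simp
  -- antitonicity of cleaf, for integrability
  have cmono : AntitoneOn cleaf (Icc 0 T) := by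
    intro a ha b hb hab
    by_contra hlt
    push_neg at hlt
    have := lemF_strictMonoOn (hc' a ha).1 (hc' b hb).1 hlt
    rw [(hc' a ha).2, (hc' b hb).2] at this
    linarith
  -- now the main statement
  intro l hl
  rcases eq_or_lt_of_le hl.1 with h0 | h0
  · rw [← h0, hs0]
    simp
  have hcont : ContinuousOn (fun y => Real.arctan (sleaf y)) (Icc 0 l) := by
    apply Real.continuous_arctan.comp_continuousOn
    exact scont.mono (Icc_subset_Icc (le_refl 0) hl.2)
  have hint : IntervalIntegrable cleaf volume 0 l := by
    apply AntitoneOn.intervalIntegrable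
    apply cmono.mono
    rw [uIcc_of_le h0.le]
    exact Icc_subset_Icc (le_refl 0) hl.2
  have := intervalIntegral.integral_eq_sub_of_hasDeriv_right_of_le h0.le hcont
    (fun x hx => (φderiv x ⟨hx.1, lt_of_lt_of_le hx.2 hl.2⟩).hasDerivWithinAt) hint
  rw [this, hs0, Real.arctan_zero, sub_zero]
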